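/- arXiv:0809.0246 — 5 statements merged into one kernel-verified Lean document; each statement's English description precedes it below -/
import Mathlib

section
/- Let φ, ψ : [0,∞) → ℝ satisfy φ(s) + t·ψ(s) ≥ φ(t) + t·ψ(t) for all s, t ≥ 0. Then φ is right-differentiable at 0 with derivative 0, i.e., lim_{t→0⁺} (φ(t) − φ(0))/t = 0. -/
open Filter Topology Set

/-- Abstract Theorem 2.6: `φ` is right-differentiable at `0` with derivative `0`. -/
theorem phi_right_deriv_zero (φ ψ : ℝ → ℝ)
    (hmin : ∀ s t : ℝ, 0 ≤ s → 0 ≤ t → φ t + t * ψ t ≤ φ s + t * ψ s) :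
    Tendsto (fun t : ℝ => (φ t - φ 0) / t) (𝓝[>] (0 : ℝ)) (𝓝 0) := by
  -- ψ is antitone on [0,∞)
  have hψ : ∀ u t : ℝ, 0 ≤ u → u ≤ t → ψ t ≤ ψ u := by
    intro u t hu hut
    rcases eq_or_lt_of_le hut with rfl | hlt
    · exact le_rfl
    · have h1 := hmin u t hu (hu.trans hut)
      have h2 := hmin t u (hu.trans hut) hu
      nlinarith
  -- φ(0) ≤ φ(t)
  have hφ0 : ∀ t : ℝ, 0 ≤ t → φ 0 ≤ φ t := by
    intro t ht
    have := hmin t 0 ht le_rfl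
    linarith
  obtain ⟨L, hL⟩ : ∃ L : ℝ, L = sSup (ψ '' Ioi 0) := ⟨_, rfl⟩
  have hbdd : BddAbove (ψ '' Ioi 0) := by
    refine ⟨ψ 0, ?_⟩
    rintro _ ⟨u, hu, rfl⟩
    exact hψ 0 u le_rfl (le_of_lt hu)
  have hle_L : ∀ u : ℝ, 0 < u → ψ u ≤ L := by
    intro u hu; rw [hL]; exact le_csSup hbdd ⟨u, hu, rfl⟩
  -- ψ tends to L from the right at 0
  have hψtend : Tendsto ψ (𝓝[>] (0 : ℝ)) (𝓝 L) := by
    rw [hL]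
    refine AntitoneOn.tendsto_nhdsGT ?_ hbdd
    intro a ha b hb hab
    exact hψ a b (le_of_lt ha) hab
  -- key upper bound: φ t - φ 0 ≤ t * (L - ψ t) for t > 0
  have hupper : ∀ t : ℝ, 0 < t → φ t - φ 0 ≤ t * (L - ψ t) := by
    intro t ht
    refine le_of_forall_pos_le_add ?_
    intro ε hε
    obtain ⟨C, hC⟩ : ∃ C : ℝ, C = ψ 0 - ψ t := ⟨_, rfl⟩
    have hC0 : 0 ≤ C := by
      have := hψ 0 t le_rfl ht.le
      linarith
    obtain ⟨u, hu⟩ : ∃ u : ℝ, u = min t (ε / (C + 1)) := ⟨_, rfl⟩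
    have hu0 : 0 < u := by
      rw [hu]; exact lt_min ht (div_pos hε (by linarith))
    have hut : u ≤ t := by rw [hu]; exact min_le_left _ _
    -- φ u - φ 0 ≤ u * C ≤ ε
    have h1 := hmin 0 u le_rfl hu0.le
    have hψut : ψ t ≤ ψ u := hψ u t hu0.le hut
    have hφu : φ u - φ 0 ≤ u * C := by nlinarith
    have huε : u * C ≤ ε := by
      have h2 : u ≤ ε / (C + 1) := by rw [hu]; exact min_le_right _ _
      have h3 : u * C ≤ (ε / (C + 1)) * C := by nlinarith
      have h4 : (ε / (C + 1)) * C ≤ ε := by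
        rw [div_mul_eq_mul_div, div_le_iff₀ (by linarith)]
        nlinarith
      linarith
    -- φ t - φ u ≤ t * (ψ u - ψ t) ≤ t * (L - ψ t)
    have h5 := hmin u t hu0.le ht.le
    have h6 : ψ u ≤ L := hle_L u hu0
    nlinarith
  have hlower : ∀ t : ℝ, 0 < t → 0 ≤ (φ t - φ 0) / t := by
    intro t ht
    exact div_nonneg (by linarith [hφ0 t ht.le]) ht.le
  have hub : ∀ t : ℝ, 0 < t → (φ t - φ 0) / t ≤ L - ψ t := by
    intro t ht
    rw [div_le_iff₀ ht]
    linarith [hupper t ht, mul_comm t (L - ψ t)]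
  have htendub : Tendsto (fun t : ℝ => L - ψ t) (𝓝[>] (0 : ℝ)) (𝓝 0) := by
    have := Tendsto.sub (tendsto_const_nhds (x := L)) hψtend
    simpa using this
  refine tendsto_of_tendsto_of_tendsto_of_le_of_le' tendsto_const_nhds htendub ?_ ?_
  · filter_upwards [self_mem_nhdsWithin] with t ht using hlower t ht
  · filter_upwards [self_mem_nhdsWithin] with t ht using hub t ht
end

section
/- Let φ, ψ : [0,∞) → ℝ satisfy φ(s) + t·ψ(s) ≥ φ(t) + t·ψ(t) for all s, t ≥ 0, and set S(t) = φ(t) + t·ψ(t). Then S is right-differentiable at 0 and S'(0⁺) = lim_{t→0⁺} ψ(t) = ψ(0⁺). -/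
open Filter Topology Set

/-- Abstract Step 1 of the proof of Theorem 1.1: `S t = φ t + t ψ t` is
right-differentiable at `0` and its right derivative is `ψ(0⁺) = lim_{t→0⁺} ψ t`. -/
theorem S_right_deriv (φ ψ S : ℝ → ℝ)
    (hmin : ∀ s t : ℝ, 0 ≤ s → 0 ≤ t → φ t + t * ψ t ≤ φ s + t * ψ s)
    (hS : ∀ t : ℝ, S t = φ t + t * ψ t) :
    ∃ L : ℝ, Tendsto ψ (𝓝[>] (0 : ℝ)) (𝓝 L) ∧
      Tendsto (fun t : ℝ => (S t - S 0) / t) (𝓝[>] (0 : ℝ)) (𝓝 L) := by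
  -- ψ is antitone on (0, ∞)
  have hanti : AntitoneOn ψ (Ioi (0 : ℝ)) := by
    intro a ha b hb hab
    rcases eq_or_lt_of_le hab with rfl | hlt
    · exact le_refl _
    have h1 := hmin a b (le_of_lt ha) (le_of_lt (ha.trans hlt))
    have h2 := hmin b a (le_of_lt (ha.trans hlt)) (le_of_lt ha)
    nlinarith
  -- ψ is bounded above by ψ 0 on (0,∞)
  have hub : ∀ u : ℝ, 0 < u → ψ u ≤ ψ 0 := by
    intro u hu
    have h1 := hmin 0 u (le_refl 0) hu.le
    have h2 := hmin u 0 hu.le (le_refl 0)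
    nlinarith
  have hbdd : BddAbove (ψ '' Ioi (0 : ℝ)) := by
    refine ⟨ψ 0, ?_⟩
    rintro x ⟨u, hu, rfl⟩
    exact hub u hu
  set L := sSup (ψ '' Ioi (0 : ℝ)) with hL
  have hψlim : Tendsto ψ (𝓝[>] (0 : ℝ)) (𝓝 L) :=
    hanti.tendsto_nhdsGT hbdd
  have hψleL : ∀ u : ℝ, 0 < u → ψ u ≤ L := fun u hu =>
    le_csSup hbdd ⟨u, hu, rfl⟩
  refine ⟨L, hψlim, ?_⟩
  -- φ 0 ≤ φ t for t ≥ 0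
  have hφ0 : ∀ t : ℝ, 0 ≤ t → φ 0 ≤ φ t := by
    intro t ht
    have := hmin t 0 ht (le_refl 0)
    linarith
  -- lower bound: ψ t ≤ (S t - S 0)/t
  have hlow : ∀ t : ℝ, 0 < t → ψ t ≤ (S t - S 0) / t := by
    intro t ht
    rw [le_div_iff₀ ht]
    have := hφ0 t ht.le
    simp only [hS]
    nlinarith
  -- upper bound: (S t - S 0)/t ≤ L
  have hupp : ∀ t : ℝ, 0 < t → (S t - S 0) / t ≤ L := by
    intro t ht
    rw [div_le_iff₀ ht]
    have key : S t - S 0 ≤ L * t := by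
      refine le_of_forall_pos_le_add (fun ε hε => ?_)
      set C : ℝ := |ψ 0 - ψ 1| + 1 with hC
      have hCpos : 0 < C := by positivity
      set u : ℝ := min 1 (ε / C) with hu
      have hu0 : 0 < u := lt_min one_pos (div_pos hε hCpos)
      have hu1 : u ≤ 1 := min_le_left _ _
      -- S t ≤ φ u + t ψ u
      have h1 := hmin u t hu0.le ht.le
      -- φ u ≤ φ 0 + u (ψ 0 - ψ u)
      have h2 := hmin 0 u (le_refl 0) hu0.le
      have hψuL := hψleL u hu0
      -- ψ 1 ≤ ψ u
      have hψ1u : ψ 1 ≤ ψ u := by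
        rcases eq_or_lt_of_le hu1 with h | h
        · rw [h]
        · exact hanti (mem_Ioi.2 hu0) (mem_Ioi.2 one_pos) hu1
      have huC : u * C ≤ ε := by
        calc u * C ≤ (ε / C) * C := by
              exact mul_le_mul_of_nonneg_right (min_le_right _ _) hCpos.le
        _ = ε := div_mul_cancel₀ _ hCpos.ne'
      have hφu : φ u - φ 0 ≤ u * C := by
        have : ψ 0 - ψ u ≤ C := by
          have : ψ 0 - ψ u ≤ ψ 0 - ψ 1 := by linarith
          calc ψ 0 - ψ u ≤ ψ 0 - ψ 1 := this
            _ ≤ |ψ 0 - ψ 1| := le_abs_self _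
            _ ≤ C := by simp [hC]
        nlinarith
      have : S t - S 0 ≤ (φ u - φ 0) + t * ψ u := by
        simp only [hS]
        linarith
      have : S t - S 0 ≤ u * C + t * L := by
        nlinarith
      linarith [huC, this]
    linarith
  -- squeeze
  have hev1 : ∀ᶠ t in 𝓝[>] (0 : ℝ), ψ t ≤ (S t - S 0) / t :=
    eventually_nhdsWithin_of_forall (fun t ht => hlow t ht)
  have hev2 : ∀ᶠ t in 𝓝[>] (0 : ℝ), (S t - S 0) / t ≤ L :=
    eventually_nhdsWithin_of_forall (fun t ht => hupp t ht)
  exact tendsto_of_tendsto_of_tendsto_of_le_of_le' hψlim tendsto_const_nhds hev1 hev2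
end

section
/- Fix r > 0, N ≥ 2, 1 < p < ∞. Let S : (r, ∞) → (0, ∞) be differentiable, satisfy S'(R) = −((N−1)/R)·S(R) + 1 − (p−1)·S(R)^{p/(p−1)} for all R > r, and suppose S(R) → +∞ as R → r⁺. Then S(R)^{p/(p−1)} → 1/(p−1) as R → +∞. -/
open Filter Topology Set

lemma stay_below {f f' : ℝ → ℝ} {a c : ℝ}
    (hf : ∀ x ∈ Ici a, HasDerivAt f (f' x) x)
    (ha : f a ≤ c) (hc : ∀ x ∈ Ici a, f x = c → f' x < 0) :
    ∀ x ∈ Ici a, f x ≤ c := by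
  intro b hb
  by_contra hfb
  push_neg at hfb
  set K : Set ℝ := {x | x ∈ Icc a b ∧ f x ≤ c} with hK
  have hKne : K.Nonempty := ⟨a, ⟨le_rfl, hb⟩, ha⟩
  have hKbdd : BddAbove K := ⟨b, fun x hx => hx.1.2⟩
  set t := sSup K with ht
  have hat : a ≤ t := le_csSup hKbdd ⟨⟨le_rfl, hb⟩, ha⟩
  have htb : t ≤ b := csSup_le hKne fun x hx => hx.1.2
  have htcl : t ∈ closure K := csSup_mem_closure hKne hKbdd
  have hcont : ContinuousAt f t := (hf t hat).continuousAt
  have hneK : (𝓝[K] t).NeBot := mem_closure_iff_nhdsWithin_neBot.mp htcl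
  have hft : f t ≤ c := by
    have h1 : Tendsto f (𝓝[K] t) (𝓝 (f t)) :=
      hcont.continuousWithinAt.tendsto
    exact le_of_tendsto h1 (eventually_nhdsWithin_of_forall fun x hx => hx.2)
  have htb' : t < b := lt_of_le_of_ne htb (fun h => absurd hfb (not_lt.mpr (h ▸ hft)))
  have key : ∀ x, t < x → x ≤ b → ¬ f x ≤ c := fun x h1 h2 h3 =>
    absurd (le_csSup hKbdd ⟨⟨hat.trans h1.le, h2⟩, h3⟩) (not_le.mpr h1)
  rcases lt_or_eq_of_le hft with hlt | heq
  · have h0 : ∀ᶠ x in 𝓝 t, f x < c := hcont (Iio_mem_nhds hlt)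
    have h2 : ∀ᶠ x in 𝓝[>] t, f x < c ∧ x ∈ Ioo t b := by
      filter_upwards [eventually_nhdsWithin_of_eventually_nhds h0,
        Ioo_mem_nhdsGT_of_mem ⟨le_rfl, htb'⟩] with x h1 h2 using ⟨h1, h2⟩
    obtain ⟨x, hx1, hx2⟩ := h2.exists
    exact key x hx2.1 hx2.2.le hx1.le
  · have hd := hc t hat heq
    have hs : Tendsto (slope f t) (𝓝[≠] t) (𝓝 (f' t)) :=
      hasDerivAt_iff_tendsto_slope.mp (hf t hat)
    have h0 : ∀ᶠ x in 𝓝[≠] t, slope f t x < 0 := hs (Iio_mem_nhds hd)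
    have h0' : ∀ᶠ x in 𝓝[>] t, slope f t x < 0 :=
      nhdsWithin_mono t (fun x (hx : t < x) => ne_of_gt hx) h0
    have h2 : ∀ᶠ x in 𝓝[>] t, slope f t x < 0 ∧ x ∈ Ioo t b := by
      filter_upwards [h0', Ioo_mem_nhdsGT_of_mem ⟨le_rfl, htb'⟩] with x h1 h2 using ⟨h1, h2⟩
    obtain ⟨x, hx1, hx2⟩ := h2.exists
    have hxt : 0 < x - t := sub_pos.mpr hx2.1
    have : f x - f t < 0 := by
      have := hx1
      rw [slope_def_field] at this
      calc f x - f t = (f x - f t) / (x - t) * (x - t) := by field_simp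
        _ < 0 := mul_neg_of_neg_of_pos this hxt
    exact key x hx2.1 hx2.2.le (by linarith [heq ▸ this])

lemma stay_above {f f' : ℝ → ℝ} {a c : ℝ}
    (hf : ∀ x ∈ Ici a, HasDerivAt f (f' x) x)
    (ha : c ≤ f a) (hc : ∀ x ∈ Ici a, f x = c → 0 < f' x) :
    ∀ x ∈ Ici a, c ≤ f x := by
  intro x hx
  have := stay_below (f := fun z => -f z) (f' := fun z => -(f' z)) (a := a) (c := -c)
    (fun y hy => (hf y hy).neg) (by show -f a ≤ -c; linarith)
    (fun y hy hfy => by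
      have h1 : -f y = -c := hfy
      have h2 : f y = c := by linarith
      show -(f' y) < 0
      linarith [hc y hy h2]) x hx
  simpa using this

lemma linear_lower {f f' : ℝ → ℝ} {a δ : ℝ}
    (hf : ∀ x ∈ Ici a, HasDerivAt f (f' x) x)
    (hδ : ∀ x ∈ Ioi a, δ ≤ f' x) :
    ∀ x ∈ Ici a, f a + δ * (x - a) ≤ f x := by
  intro x hx
  have hg : ∀ y ∈ Ici a, HasDerivAt (fun z => f z - δ * z) (f' y - δ) y := fun y hy =>
    (hf y hy).sub (by simpa using (hasDerivAt_id y).const_mul δ)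
  have hmono : MonotoneOn (fun z => f z - δ * z) (Ici a) := by
    apply monotoneOn_of_deriv_nonneg (convex_Ici a)
    · exact fun y hy => (hg y hy).continuousAt.continuousWithinAt
    · intro y hy
      rw [interior_Ici] at hy
      exact (hg y (mem_Ici.mpr (le_of_lt hy))).differentiableAt.differentiableWithinAt
    · intro y hy
      rw [interior_Ici] at hy
      rw [(hg y (mem_Ici.mpr (le_of_lt hy))).deriv]
      linarith [hδ y hy]
  have := hmono self_mem_Ici hx hx
  simp only at this
  linarith

lemma linear_upper {f f' : ℝ → ℝ} {a δ : ℝ}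
    (hf : ∀ x ∈ Ici a, HasDerivAt f (f' x) x)
    (hδ : ∀ x ∈ Ioi a, f' x ≤ -δ) :
    ∀ x ∈ Ici a, f x ≤ f a - δ * (x - a) := by
  intro x hx
  have := linear_lower (f := fun z => -f z) (f' := fun z => -(f' z)) (δ := δ)
    (fun y hy => (hf y hy).neg) (fun y hy => by show δ ≤ -(f' y); linarith [hδ y hy]) x hx
  linarith
/-- Proposition 1.5, Step 2: if moreover `S(R) → +∞` as `R → r⁺`, then
`S(R)^{p/(p-1)} → 1/(p-1)` as `R → +∞`. -/
theorem Sp_limit_at_infinity (N : ℕ) (hN : 2 ≤ N) (p r : ℝ) (hp : 1 < p) (hr : 0 < r)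
    (S : ℝ → ℝ) (hpos : ∀ R ∈ Ioi r, 0 < S R)
    (hODE : ∀ R ∈ Ioi r,
      HasDerivAt S (-(((N : ℝ) - 1) / R) * S R + 1 - (p - 1) * S R ^ (p / (p - 1))) R)
    (htop : Tendsto S (𝓝[>] r) atTop) :
    Tendsto (fun R => S R ^ (p / (p - 1))) atTop (𝓝 (1 / (p - 1))) := by
  have hp1 : (0:ℝ) < p - 1 := by linarith
  set q : ℝ := p / (p - 1) with hqdef
  have hq : 0 < q := div_pos (by linarith) hp1
  have hN1 : (1:ℝ) ≤ (N:ℝ) - 1 := by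
    have : (2:ℝ) ≤ (N:ℝ) := by exact_mod_cast hN
    linarith
  set s0 : ℝ := (1/(p-1)) ^ q⁻¹ with hs0def
  have hs0 : 0 < s0 := Real.rpow_pos_of_pos (by positivity) _
  have hs0q : s0 ^ q = 1/(p-1) := Real.rpow_inv_rpow (by positivity) (ne_of_gt hq)
  -- Step A: eventual upper bound by any supersolution level
  have stepA : ∀ c : ℝ, 0 < c → 1 < (p-1) * c ^ q → ∀ᶠ R in atTop, S R ≤ c := by
    intro c hc hcq
    set δ : ℝ := (p-1) * c ^ q - 1 with hδdef
    have hδ : 0 < δ := by simp only [hδdef]; linarith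
    have hex : ∃ R0, r < R0 ∧ S R0 ≤ c := by
      by_contra h
      push_neg at h
      have hder : ∀ x ∈ Ici (r+1),
          HasDerivAt S (-(((N:ℝ)-1)/x) * S x + 1 - (p-1) * S x ^ q) x :=
        fun x hx => hODE x (by simp only [mem_Ioi]; linarith [mem_Ici.mp hx])
      have hFle : ∀ x ∈ Ioi (r+1),
          -(((N:ℝ)-1)/x) * S x + 1 - (p-1) * S x ^ q ≤ -δ := by
        intro x hx
        have hxr : r < x := by have := mem_Ioi.mp hx; linarith
        have hSx : c < S x := h x hxr
        have h1 : 0 ≤ ((N:ℝ)-1)/x * S x :=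
          mul_nonneg (div_nonneg (by linarith) (by linarith)) (hpos x hxr).le
        have h2 : c ^ q ≤ S x ^ q := Real.rpow_le_rpow hc.le hSx.le hq.le
        have h3 : (p-1) * c ^ q ≤ (p-1) * S x ^ q :=
          mul_le_mul_of_nonneg_left h2 hp1.le
        simp only [hδdef]
        linarith
      obtain ⟨x, hx1, hx2⟩ : ∃ x, r+1 ≤ x ∧ S (r+1) / δ ≤ x - (r+1) :=
        ⟨max (r+1) (S (r+1)/δ + (r+1)), le_max_left _ _,
          by linarith [le_max_right (r+1) (S (r+1)/δ + (r+1))]⟩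
      have h3 := linear_upper hder hFle x hx1
      have h4 : S (r+1) ≤ δ * (x - (r+1)) := by
        calc S (r+1) = δ * (S (r+1)/δ) := by field_simp
          _ ≤ δ * (x - (r+1)) := mul_le_mul_of_nonneg_left hx2 hδ.le
      have h5 : 0 < S x := hpos x (by simp only [mem_Ioi]; linarith)
      linarith
    obtain ⟨R0, hR0r, hR0⟩ := hex
    have hder : ∀ x ∈ Ici R0,
        HasDerivAt S (-(((N:ℝ)-1)/x) * S x + 1 - (p-1) * S x ^ q) x :=
      fun x hx => hODE x (by simp only [mem_Ioi]; linarith [mem_Ici.mp hx])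
    have hbelow := stay_below hder hR0 ?_
    · exact eventually_atTop.mpr ⟨R0, fun x hx => hbelow x hx⟩
    · intro x hx hfx
      have hxr : r < x := lt_of_lt_of_le hR0r (mem_Ici.mp hx)
      show -(((N:ℝ)-1)/x) * S x + 1 - (p-1) * S x ^ q < 0
      rw [hfx]
      have h1 : 0 < ((N:ℝ)-1)/x * c :=
        mul_pos (div_pos (by linarith) (by linarith)) hc
      linarith
  -- fixed upper bound M := s0 + 1
  have hMq : 1 < (p-1) * (s0+1) ^ q := by
    have h1 : s0 ^ q < (s0+1) ^ q := Real.rpow_lt_rpow hs0.le (by linarith) hq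
    rw [hs0q] at h1
    calc (1:ℝ) = (p-1) * (1/(p-1)) := by field_simp
      _ < (p-1) * (s0+1)^q := mul_lt_mul_of_pos_left h1 hp1
  have hub := stepA (s0+1) (by linarith) hMq
  -- Step B: eventual lower bound by any subsolution level
  have stepB : ∀ c : ℝ, 0 < c → c ≤ s0 + 1 → (p-1) * c ^ q < 1 →
      ∀ᶠ R in atTop, c ≤ S R := by
    intro c hc hcM hcq
    set δ : ℝ := (1 - (p-1) * c ^ q)/2 with hδdef
    have hδ : 0 < δ := by simp only [hδdef]; linarith
    obtain ⟨A, hA⟩ := eventually_atTop.mp hub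
    obtain ⟨R1, hR1A, hR1r, hR1b⟩ :
        ∃ R1, A ≤ R1 ∧ r + 1 ≤ R1 ∧ ((N:ℝ)-1)*(s0+1)/δ < R1 :=
      ⟨max A (max (r+1) (((N:ℝ)-1)*(s0+1)/δ + 1)), le_max_left _ _,
        le_trans (le_max_left _ _) (le_max_right _ _),
        lt_of_lt_of_le (by linarith) (le_trans (le_max_right _ _) (le_max_right _ _))⟩
    have hdrag : ∀ x, R1 ≤ x → ∀ y : ℝ, 0 ≤ y → y ≤ s0 + 1 → ((N:ℝ)-1)/x * y ≤ δ := by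
      intro x hx y hy0 hyM
      have hx0 : 0 < x := by linarith
      have hxb : ((N:ℝ)-1)*(s0+1)/δ < x := lt_of_lt_of_le hR1b hx
      have h1 : ((N:ℝ)-1)/x * y ≤ ((N:ℝ)-1)/x * (s0+1) :=
        mul_le_mul_of_nonneg_left hyM (div_nonneg (by linarith) hx0.le)
      have h2 : ((N:ℝ)-1)*(s0+1) < x * δ := (div_lt_iff₀ hδ).mp hxb
      have h3 : ((N:ℝ)-1)/x * (s0+1) ≤ δ := by
        rw [div_mul_eq_mul_div, div_le_iff₀ hx0]
        linarith
      linarith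
    have hex : ∃ R2, R1 ≤ R2 ∧ c ≤ S R2 := by
      by_contra h
      push_neg at h
      have hder : ∀ x ∈ Ici R1,
          HasDerivAt S (-(((N:ℝ)-1)/x) * S x + 1 - (p-1) * S x ^ q) x :=
        fun x hx => hODE x (by simp only [mem_Ioi]; linarith [mem_Ici.mp hx])
      have hFge : ∀ x ∈ Ioi R1,
          δ ≤ -(((N:ℝ)-1)/x) * S x + 1 - (p-1) * S x ^ q := by
        intro x hx
        have hx1 : R1 ≤ x := (mem_Ioi.mp hx).le
        have hxr : r < x := by linarith
        have hSc : S x < c := h x hx1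
        have hSM : S x ≤ s0 + 1 := hA x (le_trans hR1A hx1)
        have hS0 : 0 < S x := hpos x hxr
        have h1 : ((N:ℝ)-1)/x * S x ≤ δ := hdrag x hx1 (S x) hS0.le hSM
        have h2 : S x ^ q ≤ c ^ q := Real.rpow_le_rpow hS0.le hSc.le hq.le
        have h3 : (p-1) * S x ^ q ≤ (p-1) * c ^ q :=
          mul_le_mul_of_nonneg_left h2 hp1.le
        simp only [hδdef] at *
        linarith
      obtain ⟨x, hx1, hx2⟩ : ∃ x, R1 ≤ x ∧ (c - S R1) / δ ≤ x - R1 :=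
        ⟨max R1 ((c - S R1)/δ + R1), le_max_left _ _,
          by linarith [le_max_right R1 ((c - S R1)/δ + R1)]⟩
      have h3 := linear_lower hder hFge x hx1
      have h4 : c - S R1 ≤ δ * (x - R1) := by
        calc c - S R1 = δ * ((c - S R1)/δ) := by field_simp
          _ ≤ δ * (x - R1) := mul_le_mul_of_nonneg_left hx2 hδ.le
      have h5 : S x < c := h x hx1
      linarith
    obtain ⟨R2, hR21, hR2⟩ := hex
    have hder : ∀ x ∈ Ici R2,
        HasDerivAt S (-(((N:ℝ)-1)/x) * S x + 1 - (p-1) * S x ^ q) x :=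
      fun x hx => hODE x (by simp only [mem_Ioi]; linarith [mem_Ici.mp hx])
    have habove := stay_above hder hR2 ?_
    · exact eventually_atTop.mpr ⟨R2, fun x hx => habove x hx⟩
    · intro x hx hfx
      have hx1 : R1 ≤ x := le_trans hR21 (mem_Ici.mp hx)
      show 0 < -(((N:ℝ)-1)/x) * S x + 1 - (p-1) * S x ^ q
      rw [hfx]
      have h1 : ((N:ℝ)-1)/x * c ≤ δ := hdrag x hx1 c hc.le hcM
      simp only [hδdef] at *
      linarith
  -- Step C: S → s0
  have hS : Tendsto S atTop (𝓝 s0) := by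
    refine tendsto_order.2 ⟨?_, ?_⟩
    · intro b hb
      set c : ℝ := max ((b + s0)/2) (s0/2) with hcdef
      have hc0 : 0 < c := lt_of_lt_of_le (by linarith) (le_max_right _ _)
      have hcs : c < s0 := max_lt (by linarith) (by linarith)
      have hbc : b < c := lt_of_lt_of_le (by linarith) (le_max_left _ _)
      have hcq : (p-1) * c ^ q < 1 := by
        have h1 : c ^ q < s0 ^ q := Real.rpow_lt_rpow hc0.le hcs hq
        rw [hs0q] at h1
        calc (p-1) * c ^ q < (p-1) * (1/(p-1)) := mul_lt_mul_of_pos_left h1 hp1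
          _ = 1 := by field_simp
      filter_upwards [stepB c hc0 (by linarith) hcq] with R hR
      linarith
    · intro b hb
      set c : ℝ := (b + s0)/2 with hcdef
      have hc0 : 0 < c := by simp only [hcdef]; linarith
      have hcs : s0 < c := by simp only [hcdef]; linarith
      have hcb : c < b := by simp only [hcdef]; linarith
      have hcq : 1 < (p-1) * c ^ q := by
        have h1 : s0 ^ q < c ^ q := Real.rpow_lt_rpow hs0.le hcs hq
        rw [hs0q] at h1
        calc (1:ℝ) = (p-1) * (1/(p-1)) := by field_simp
          _ < (p-1) * c ^ q := mul_lt_mul_of_pos_left h1 hp1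
      filter_upwards [stepA c hc0 hcq] with R hR
      linarith
  have hfin : Tendsto (fun R => S R ^ q) atTop (𝓝 (s0 ^ q)) :=
    ((Real.continuousAt_rpow_const s0 q (Or.inl (ne_of_gt hs0))).tendsto).comp hS
  rw [hs0q] at hfin
  exact hfin
end

section
/- Fix r > 0, N ≥ 2, 1 < p < ∞. Let S : (r, ∞) → (0, ∞) be differentiable with S'(R) = −((N−1)/R)·S(R) + 1 − (p−1)·S(R)^{p/(p−1)} and S(R) → +∞ as R → r⁺, and define Q(R) = S(R)^{−p/(p−1)}·(1 − ((N−1)/R)·S(R)) + 1. Then lim_{R→+∞} Q(R) = p. -/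
open Filter Topology Set

/-- Barrier lemma: if `g` has derivative at least `η > 0` whenever `g ≤ m` (for `x ≥ x₀`),
then eventually `m ≤ g`. -/
lemma eventually_ge_of_deriv_pos (g g' : ℝ → ℝ) (x₀ m η : ℝ) (hη : 0 < η)
    (hderiv : ∀ x, x₀ ≤ x → HasDerivAt g (g' x) x)
    (hgrow : ∀ x, x₀ ≤ x → g x ≤ m → η ≤ g' x) :
    ∀ᶠ x in atTop, m ≤ g x := by
  have claim : ∀ a b, x₀ ≤ a → a ≤ b → (∀ x ∈ Ioo a b, g x ≤ m) →
      η * (b - a) ≤ g b - g a := by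
    intro a b ha hab hle
    have hcont : ContinuousOn g (Icc a b) := fun x hx =>
      ((hderiv x (ha.trans hx.1)).continuousAt).continuousWithinAt
    have hdiff : DifferentiableOn ℝ g (interior (Icc a b)) := by
      rw [interior_Icc]
      exact fun x hx =>
        ((hderiv x (ha.trans hx.1.le)).differentiableAt).differentiableWithinAt
    refine (convex_Icc a b).mul_sub_le_image_sub_of_le_deriv hcont hdiff ?_ a
      (left_mem_Icc.2 hab) b (right_mem_Icc.2 hab) hab
    intro x hx
    rw [interior_Icc] at hx
    rw [(hderiv x (ha.trans hx.1.le)).deriv]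
    exact hgrow x (ha.trans hx.1.le) (hle x hx)
  obtain ⟨x₁, hx₁, hgx₁⟩ : ∃ x₁, x₀ ≤ x₁ ∧ m ≤ g x₁ := by
    by_contra h
    push_neg at h
    set b := max x₀ (x₀ + (m - g x₀) / η + 1) with hb
    have hb₀ : x₀ ≤ b := le_max_left _ _
    have hb₁ : x₀ + (m - g x₀) / η + 1 ≤ b := le_max_right _ _
    have hgr := claim x₀ b le_rfl hb₀ (fun x hx => (h x hx.1.le).le)
    have hηd : η * ((m - g x₀) / η) = m - g x₀ := mul_div_cancel₀ _ (ne_of_gt hη)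
    have hgb := h b hb₀
    nlinarith
  filter_upwards [eventually_ge_atTop x₁] with x₂ hx₂
  by_contra hlt
  push_neg at hlt
  have hx₁₂ : x₁ < x₂ := by
    rcases eq_or_lt_of_le hx₂ with h | h
    · exact absurd hgx₁ (by rw [h]; exact not_le.2 hlt)
    · exact h
  have hcont : ContinuousOn g (Icc x₁ x₂) := fun x hx =>
    ((hderiv x (hx₁.trans hx.1)).continuousAt).continuousWithinAt
  set A := Icc x₁ x₂ ∩ g ⁻¹' (Ici m) with hA
  have hAc : IsClosed A := hcont.preimage_isClosed_of_isClosed isClosed_Icc isClosed_Ici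
  have hAne : A.Nonempty := ⟨x₁, ⟨le_rfl, hx₁₂.le⟩, hgx₁⟩
  have hAbdd : BddAbove A := ⟨x₂, fun y hy => hy.1.2⟩
  have hx₃A : sSup A ∈ A := hAc.csSup_mem hAne hAbdd
  set x₃ := sSup A with hx₃
  have hx₃lt : x₃ < x₂ :=
    lt_of_le_of_ne hx₃A.1.2 (fun h => absurd hx₃A.2 (by rw [h]; exact not_le.2 hlt))
  have hup : ∀ y ∈ Ioo x₃ x₂, g y ≤ m := by
    intro y hy
    by_contra hgy
    push_neg at hgy
    have hyA : y ∈ A := ⟨⟨hx₃A.1.1.trans hy.1.le, hy.2.le⟩, hgy.le⟩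
    exact absurd (le_csSup hAbdd hyA) (not_le.2 hy.1)
  have hgr := claim x₃ x₂ (hx₁.trans hx₃A.1.1) hx₃lt.le hup
  have hx₃m : m ≤ g x₃ := hx₃A.2
  nlinarith [mul_pos hη (sub_pos.2 hx₃lt)]

set_option maxHeartbeats 1000000 in
/-- Proposition 1.5, second half: `Q(R) → p` as `R → +∞`, where
`Q(R) = S(R)^{-p/(p-1)} (1 - ((N-1)/R) S(R)) + 1`. -/
theorem Q_limit_at_infinity (N : ℕ) (hN : 2 ≤ N) (p r : ℝ) (hp : 1 < p) (hr : 0 < r)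
    (S : ℝ → ℝ) (hpos : ∀ R ∈ Ioi r, 0 < S R)
    (hODE : ∀ R ∈ Ioi r,
      HasDerivAt S (-(((N : ℝ) - 1) / R) * S R + 1 - (p - 1) * S R ^ (p / (p - 1))) R)
    (htop : Tendsto S (𝓝[>] r) atTop)
    (Q : ℝ → ℝ)
    (hQ : ∀ R, Q R = S R ^ (-(p / (p - 1))) * (1 - ((N : ℝ) - 1) / R * S R) + 1) :
    Tendsto Q atTop (𝓝 p) := by
  have hP : (0:ℝ) < p - 1 := by linarith
  have hP' : p - 1 ≠ 0 := ne_of_gt hP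
  have hp0 : (0:ℝ) < p := by linarith
  have hN1 : (1:ℝ) ≤ (N:ℝ) - 1 := by
    have h2 : (2:ℝ) ≤ (N:ℝ) := by exact_mod_cast hN
    linarith
  set e : ℝ := -(p-1)⁻¹ with he
  set T : ℝ → ℝ := fun R => S R ^ e with hTdef
  set F : ℝ → ℝ := fun R => 1 - T R ^ p / (p-1) + ((N:ℝ)-1) * T R / ((p-1) * R) with hFdef
  have hTpos : ∀ R ∈ Ioi r, 0 < T R := fun R hR => Real.rpow_pos_of_pos (hpos R hR) _
  -- derivative of T
  have hTderiv : ∀ R ∈ Ioi r, HasDerivAt T (F R) R := by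
    intro R hR
    have hs : 0 < S R := hpos R hR
    have hR0 : (0:ℝ) < R := hr.trans hR
    have hd := (hODE R hR).rpow_const (p := e) (Or.inl (ne_of_gt hs))
    convert hd using 1
    have h1 : S R ^ e = S R ^ (e-1) * S R := by
      rw [← Real.rpow_add_one (ne_of_gt hs)]; congr 1; ring
    have h2 : S R ^ (e-1) * S R ^ (p/(p-1)) = 1 := by
      rw [← Real.rpow_add hs]
      rw [show (e-1) + p/(p-1) = 0 by rw [he]; field_simp; ring]
      exact Real.rpow_zero _
    have h3 : (S R ^ e) ^ p = S R ^ (e-1) := by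
      rw [← Real.rpow_mul hs.le]
      congr 1; rw [he]; field_simp; ring
    have key : (-(((N:ℝ)-1)/R) * S R + 1 - (p-1) * S R ^ (p/(p-1))) * e * (S R ^ (e-1))
        = ((N:ℝ)-1) * (S R ^ (e-1) * S R) / ((p-1)*R) - S R ^ (e-1)/(p-1)
          + (S R ^ (e-1) * S R ^ (p/(p-1))) := by
      rw [he]; field_simp; ring
    rw [hFdef]
    simp only [hTdef]
    rw [h3, h1, key, h2]
    ring
  -- Q in terms of F
  have hQF : ∀ R ∈ Ioi r, Q R = p - (p-1) * F R := by
    intro R hR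
    have hs : 0 < S R := hpos R hR
    have hR0 : (0:ℝ) < R := hr.trans hR
    have hpow : (S R ^ e) ^ p = S R ^ (-(p/(p-1))) := by
      rw [← Real.rpow_mul hs.le]
      congr 1; rw [he]; field_simp
    have hbase : S R ^ e = S R ^ (-(p/(p-1))) * S R := by
      rw [← Real.rpow_add_one (ne_of_gt hs)]
      congr 1; rw [he]; field_simp; ring
    rw [hQ R, hFdef]
    simp only [hTdef]
    rw [hpow, hbase]
    field_simp
    ring
  -- the equilibrium value
  set c : ℝ := (p-1) ^ (p⁻¹ : ℝ) with hc
  have hcpos : 0 < c := Real.rpow_pos_of_pos hP _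
  have hcp : c ^ p = p - 1 := by
    rw [hc, ← Real.rpow_mul hP.le, inv_mul_cancel₀ (ne_of_gt hp0), Real.rpow_one]
  -- T tends to c
  have hTc : Tendsto T atTop (𝓝 c) := by
    rw [tendsto_order]
    constructor
    · -- lower bounds
      intro a ha
      set m := (a + c) / 2 with hm
      have ham : a < m := by rw [hm]; linarith
      have hmc : m < c := by rw [hm]; linarith
      rcases le_or_gt m 0 with hm0 | hm0
      · filter_upwards [eventually_gt_atTop r] with x hx
        exact lt_of_le_of_lt (hm0.trans' ham.le) (hTpos x hx)
      · have hmp : m ^ p < p - 1 := by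
          rw [← hcp]
          exact Real.rpow_lt_rpow hm0.le hmc hp0
        have hη : 0 < 1 - m ^ p / (p-1) := by
          rw [sub_pos, div_lt_one hP]; exact hmp
        have hev : ∀ᶠ x in atTop, m ≤ T x := by
          apply eventually_ge_of_deriv_pos T F (r+1) m _ hη
          · intro x hx; exact hTderiv x (by simp only [mem_Ioi]; linarith)
          · intro x hx hTm
            have hxr : x ∈ Ioi r := by simp only [mem_Ioi]; linarith
            have hTx : 0 < T x := hTpos x hxr
            have hx0 : 0 < x := by linarith
            have h1 : T x ^ p ≤ m ^ p := Real.rpow_le_rpow hTx.le hTm hp0.le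
            have h2 : 0 ≤ ((N:ℝ)-1) * T x / ((p-1) * x) := by positivity
            have h3 : T x ^ p / (p-1) ≤ m ^ p / (p-1) :=
              div_le_div_of_nonneg_right h1 hP.le
            rw [hFdef]; simp only
            linarith
        filter_upwards [hev] with x hx
        exact lt_of_lt_of_le ham hx
    · -- upper bounds
      intro b hb
      set m := (b + c) / 2 with hm
      have hmb : m < b := by rw [hm]; linarith
      have hcm : c < m := by rw [hm]; linarith
      have hm0 : 0 < m := hcpos.trans hcm
      have hmp : p - 1 < m ^ p := by
        rw [← hcp]
        exact Real.rpow_lt_rpow hcpos.le hcm hp0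
      have hmppos : 0 < m ^ p := Real.rpow_pos_of_pos hm0 _
      set θ : ℝ := ((p-1) / m ^ p + 1) / 2 with hθ
      have hθ1 : θ < 1 := by
        rw [hθ]
        have : (p-1) / m ^ p < 1 := (div_lt_one hmppos).2 hmp
        linarith
      have hθlb : p - 1 < θ * m ^ p := by
        have h1 : (p-1) / m ^ p < θ := by
          rw [hθ]
          have : (p-1) / m ^ p < 1 := (div_lt_one hmppos).2 hmp
          linarith
        calc p - 1 = (p-1) / m ^ p * m ^ p := by field_simp
          _ < θ * m ^ p := by exact mul_lt_mul_of_pos_right h1 hmppos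
      have hθ0 : 0 < θ := by
        have : 0 < (p-1) / m ^ p := div_pos hP hmppos
        rw [hθ]; linarith
      have hη : 0 < θ * m ^ p / (p-1) - 1 := by
        rw [sub_pos, lt_div_iff₀ hP]; linarith
      have hmp1pos : 0 < m ^ (p-1) := Real.rpow_pos_of_pos hm0 _
      set x₀ : ℝ := max (r+1) (((N:ℝ)-1) / ((1-θ) * m ^ (p-1))) with hx₀
      have hev : ∀ᶠ x in atTop, -m ≤ -T x := by
        apply eventually_ge_of_deriv_pos (fun x => -T x) (fun x => -F x) x₀ (-m) _ hη
        · intro x hx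
          have hxr : x ∈ Ioi r := by
            simp only [mem_Ioi]
            have := le_trans (le_max_left (r+1) _) hx
            linarith
          exact (hTderiv x hxr).neg
        · intro x hx hTm
          have hxr1 : r + 1 ≤ x := le_trans (le_max_left _ _) hx
          have hxr : x ∈ Ioi r := by simp only [mem_Ioi]; linarith
          have hx0 : 0 < x := by linarith
          have hTx : 0 < T x := hTpos x hxr
          have hmT : m ≤ T x := by linarith [neg_le_neg_iff.1 hTm]
          -- key: (N-1)/x ≤ (1-θ) * T x ^ (p-1)
          have hx2 : ((N:ℝ)-1) / ((1-θ) * m ^ (p-1)) ≤ x := le_trans (le_max_right _ _) hx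
          have hden : 0 < (1-θ) * m ^ (p-1) := mul_pos (by linarith) hmp1pos
          have hNx : ((N:ℝ)-1) ≤ (1-θ) * m ^ (p-1) * x := by
            have := (div_le_iff₀ hden).1 hx2
            linarith
          have hT1 : m ^ (p-1) ≤ T x ^ (p-1) := Real.rpow_le_rpow hm0.le hmT (by linarith)
          have hsplit : T x ^ p = T x * T x ^ (p-1) := by
            nth_rewrite 1 [show p = 1 + (p-1) by ring]
            rw [Real.rpow_add hTx, Real.rpow_one]
          have hTpm : m ^ p ≤ T x ^ p := Real.rpow_le_rpow hm0.le hmT hp0.le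
          have hbracket : ((N:ℝ)-1) * T x / ((p-1) * x) ≤ (1-θ) * T x ^ p / (p-1) := by
            rw [hsplit, div_le_div_iff₀ (by positivity) hP]
            have h1 : ((N:ℝ)-1) * T x ≤ (1-θ) * m ^ (p-1) * x * T x :=
              mul_le_mul_of_nonneg_right hNx hTx.le
            nlinarith [mul_le_mul_of_nonneg_right (mul_le_mul_of_nonneg_left hT1 (le_of_lt (show (0:ℝ) < 1-θ by linarith))) (mul_nonneg hx0.le hTx.le)]
          have hθT : θ * m ^ p / (p-1) ≤ θ * T x ^ p / (p-1) :=
            div_le_div_of_nonneg_right (mul_le_mul_of_nonneg_left hTpm hθ0.le) hP.le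
          simp only [hFdef, le_neg]
          have hdecomp : T x ^ p / (p-1) = θ * T x ^ p / (p-1) + (1-θ) * T x ^ p / (p-1) := by
            field_simp; ring
          linarith [hdecomp]
      filter_upwards [hev] with x hx
      have : T x ≤ m := by linarith [neg_le_neg_iff.1 hx]
      linarith
  -- F tends to 0
  have hFzero : Tendsto F atTop (𝓝 0) := by
    have h1 : Tendsto (fun R => T R ^ p) atTop (𝓝 (p-1)) := by
      have := hTc.rpow_const (p := p) (Or.inl (ne_of_gt hcpos))
      rwa [hcp] at this
    have h2 : Tendsto (fun R => ((N:ℝ)-1) * T R / ((p-1) * R)) atTop (𝓝 0) := by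
      have h3 : Tendsto (fun R => T R * R⁻¹) atTop (𝓝 (c * 0)) :=
        hTc.mul tendsto_inv_atTop_zero
      have h4 : Tendsto (fun R => ((N:ℝ)-1)/(p-1) * (T R * R⁻¹)) atTop
          (𝓝 (((N:ℝ)-1)/(p-1) * (c * 0))) := h3.const_mul _
      have h5 : (fun R : ℝ => ((N:ℝ)-1) * T R / ((p-1) * R))
          = fun R => ((N:ℝ)-1)/(p-1) * (T R * R⁻¹) := by
        funext R
        rw [div_eq_mul_inv, mul_inv, div_eq_mul_inv]
        ring
      rw [h5]
      convert h4 using 2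
      ring
    have h6 : Tendsto F atTop (𝓝 (1 - (p-1)/(p-1) + 0)) := by
      rw [hFdef]
      exact (tendsto_const_nhds.sub (h1.div_const _)).add h2
    convert h6 using 2
    rw [div_self hP']
    ring
  -- conclude
  have hQlim : Tendsto (fun R => p - (p-1) * F R) atTop (𝓝 (p - (p-1) * 0)) :=
    tendsto_const_nhds.sub ((hFzero.const_mul _))
  rw [show p - (p-1) * 0 = p by ring] at hQlim
  apply hQlim.congr'
  filter_upwards [eventually_gt_atTop r] with R hR
  exact (hQF R hR).symm
end

section
/- Let r > 0, R > r, N ≥ 2, 1 < p < ∞, and let u₀ : [r, ∞) → [0, ∞) be a C² radial profile with u₀(r) = 0, u₀'(r) = 1, u₀ > 0 on (r, ∞), satisfying the radial p-Laplace equation (s^{N−1} |u₀'|^{p−2} u₀')' = s^{N−1} u₀^{p−1} for s > r, and suppose u₀'(s)^{p−1} = S_p · u₀(s)^{p−1} holds at s = R for a constant S_p > 0 (i.e., u₀ restricted to B_R is a first eigenfunction, so this holds for all R > r). Then the map R ↦ S_p(R) := (u₀'(R)/u₀(R))^{p−1} is differentiable on (r, ∞) and satisfies ∂S_p/∂R =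 1 − ((N−1)/R)·S_p − (p−1)·S_p^{p/(p−1)}. -/
open Filter Topology Set

/-- Proposition 1.5, Step 1: the map `R ↦ S_p(R) = (u₀'(R)/u₀(R))^{p-1}` built
from the positive radial profile `u₀` (which solves the radial p-Laplace
equation `(s^{N-1} (u₀')^{p-1})' = s^{N-1} u₀^{p-1}` with `u₀(r) = 0`,
`u₀'(r) = 1`) is differentiable and satisfies the Riccati-type ODE
`S_p' = 1 - ((N-1)/R) S_p - (p-1) S_p^{p/(p-1)}`. -/
theorem Sp_satisfies_ODE (N : ℕ) (hN : 2 ≤ N) (p r : ℝ) (hp : 1 < p) (hr : 0 < r)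
    (u₀ : ℝ → ℝ) (hC : ContDiffOn ℝ 2 u₀ (Ici r))
    (h0 : u₀ r = 0) (h1 : deriv u₀ r = 1)
    (hupos : ∀ s ∈ Ioi r, 0 < u₀ s) (hu'pos : ∀ s ∈ Ioi r, 0 < deriv u₀ s)
    (hODE : ∀ s ∈ Ioi r,
      HasDerivAt (fun t => t ^ (N - 1) * deriv u₀ t ^ (p - 1))
        (s ^ (N - 1) * u₀ s ^ (p - 1)) s) :
    ∀ R ∈ Ioi r,
      HasDerivAt (fun R => (deriv u₀ R / u₀ R) ^ (p - 1))
        (1 - ((N : ℝ) - 1) / R * ((deriv u₀ R / u₀ R) ^ (p - 1))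
          - (p - 1) * ((deriv u₀ R / u₀ R) ^ (p - 1)) ^ (p / (p - 1))) R := by
  obtain ⟨M, rfl⟩ : ∃ M, N = M + 2 := ⟨N - 2, by omega⟩
  intro R hR
  have hRr : r < R := hR
  have hR0 : 0 < R := hr.trans hRr
  have huR : 0 < u₀ R := hupos R hR
  have hu'R : 0 < deriv u₀ R := hu'pos R hR
  set a := deriv u₀ R with ha
  set b := u₀ R with hb
  have hu : HasDerivAt u₀ a R :=
    ((hC.differentiableOn (by norm_num)).differentiableAt (Ici_mem_nhds hRr)).hasDerivAt
  have hDu : HasDerivAt (fun s => u₀ s ^ (p - 1))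
      (a * (p - 1) * b ^ (p - 1 - 1)) R := hu.rpow_const (Or.inl huR.ne')
  have hpow : HasDerivAt (fun s : ℝ => s ^ (M + 2 - 1)) ((M + 1 : ℕ) * R ^ M) R := by
    simpa using hasDerivAt_pow (M + 1) R
  have hD : HasDerivAt (fun s => s ^ (M + 2 - 1) * u₀ s ^ (p - 1))
      ((M + 1 : ℕ) * R ^ M * b ^ (p - 1)
        + R ^ (M + 2 - 1) * (a * (p - 1) * b ^ (p - 1 - 1))) R := hpow.mul hDu
  have hF := hODE R hR
  have hDne : R ^ (M + 2 - 1) * b ^ (p - 1) ≠ 0 := by positivity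
  have hdiv := hF.div hD hDne
  have heq : (fun s => (deriv u₀ s / u₀ s) ^ (p - 1)) =ᶠ[𝓝 R]
      fun s => (s ^ (M + 2 - 1) * deriv u₀ s ^ (p - 1)) /
        (s ^ (M + 2 - 1) * u₀ s ^ (p - 1)) := by
    filter_upwards [Ioi_mem_nhds hRr] with s hs
    rw [Real.div_rpow (hu'pos s hs).le (hupos s hs).le,
      mul_div_mul_left _ _ (pow_ne_zero _ (hr.trans hs).ne')]
  have hmain := hdiv.congr_of_eventuallyEq heq
  convert hmain using 1
  case e'_4 => rfl
  case e'_5 => rfl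
  have hp1 : p - 1 ≠ 0 := by intro h; simp [sub_eq_zero] at h; linarith
  have hAB : (a / b) ^ (p - 1) = a ^ (p - 1) / b ^ (p - 1) :=
    Real.div_rpow hu'R.le huR.le _
  have hSp : ((a / b) ^ (p - 1)) ^ (p / (p - 1)) =
      (a ^ (p - 1) * a) / (b ^ (p - 1) * b) := by
    rw [← Real.rpow_mul (by positivity : (0:ℝ) ≤ a / b)]
    have hmul : (p - 1) * (p / (p - 1)) = p := by field_simp
    rw [hmul, Real.div_rpow hu'R.le huR.le, ← Real.rpow_add_one hu'R.ne',
      ← Real.rpow_add_one huR.ne']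
    norm_num
  have hbm : b ^ (p - 1 - 1) = b ^ (p - 1) / b := Real.rpow_sub_one huR.ne' _
  rw [← ha, ← hb]
  rw [hSp, hAB, hbm]
  have hAne : a ^ (p - 1) ≠ 0 := by positivity
  have hBne : b ^ (p - 1) ≠ 0 := by positivity
  simp only [show M + 2 - 1 = M + 1 from rfl, pow_succ]
  push_cast
  field_simp
  ring
end
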